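/- Let X be an infinite chain such that X \ X^0 is finite. Then every order-preserving self-map of X is a composition of finitely many order-preserving self-maps whose images have cardinality |X|; that is, O(X) = ⟨J⟩. -/

import Mathlib

open Cardinal Set List

namespace Stmt18

variable {Y : Type*} [LinearOrder Y] [Infinite Y]

def Lo (Y : Type*) [LinearOrder Y] : Set Y := {x | ¬ Cardinal.mk ↥(Set.Iic x) = Cardinal.mk Y}
def Hi (Y : Type*) [LinearOrder Y] : Set Y := {x | ¬ Cardinal.mk ↥(Set.Ici x) = Cardinal.mk Y}

set_option linter.unusedSectionVars false

section Prelim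

variable (hfin : {x : Y | ¬ (Cardinal.mk ↥(Set.Iic x) = Cardinal.mk Y ∧
      Cardinal.mk ↥(Set.Ici x) = Cardinal.mk Y)}.Finite)

include hfin in
lemma lohi_finite : (Lo Y ∪ Hi Y).Finite := by
  refine hfin.subset ?_
  intro x hx
  simp only [mem_setOf_eq]
  rcases hx with h | h
  · exact fun hc => h hc.1
  · exact fun hc => h hc.2

include hfin in
lemma lo_finite : (Lo Y).Finite := (lohi_finite hfin).subset subset_union_left
include hfin in
lemma hi_finite : (Hi Y).Finite := (lohi_finite hfin).subset subset_union_right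

include hfin in
lemma X0_infinite : ((Lo Y ∪ Hi Y)ᶜ).Infinite := (lohi_finite hfin).infinite_compl

/-- helper: a set containing a κ-sized set has κ-sized… (range version) -/
lemma mk_eq_of_superset {s t : Set Y} (hsub : s ⊆ t) (hs : Cardinal.mk ↥s = Cardinal.mk Y) :
    Cardinal.mk ↥t = Cardinal.mk Y :=
  le_antisymm (Cardinal.mk_set_le t) (hs ▸ Cardinal.mk_le_mk_of_subset hsub)

lemma mk_diff_finite {s t : Set Y} (hs : Cardinal.mk ↥s = Cardinal.mk Y) (ht : t.Finite) :
    Cardinal.mk ↥(s \ t) = Cardinal.mk Y := by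
  refine le_antisymm (Cardinal.mk_set_le _) ?_
  by_contra hlt
  push_neg at hlt
  have h1 : s ⊆ (s \ t) ∪ t := by
    intro x hx
    by_cases hxt : x ∈ t
    · exact Or.inr hxt
    · exact Or.inl ⟨hx, hxt⟩
  have h2 : Cardinal.mk ↥s ≤ Cardinal.mk ↥(s \ t) + Cardinal.mk ↥t :=
    le_trans (Cardinal.mk_le_mk_of_subset h1) (Cardinal.mk_union_le _ _)
  have h3 : Cardinal.mk ↥t < Cardinal.mk Y := by
    have : Cardinal.mk ↥t < Cardinal.aleph0 := ht.lt_aleph0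
    exact lt_of_lt_of_le this (Cardinal.aleph0_le_mk Y)
  have h4 : Cardinal.mk ↥(s \ t) + Cardinal.mk ↥t < Cardinal.mk Y :=
    Cardinal.add_lt_of_lt (Cardinal.aleph0_le_mk Y) hlt h3
  rw [hs] at h2
  exact absurd (lt_of_le_of_lt h2 h4) (lt_irrefl _)

lemma mem_lo_iff {x : Y} : x ∈ Lo Y ↔ Cardinal.mk ↥(Set.Iic x) < Cardinal.mk Y :=
  ⟨fun h => lt_of_le_of_ne (Cardinal.mk_set_le _) h, fun h => ne_of_lt h⟩

lemma mem_hi_iff {x : Y} : x ∈ Hi Y ↔ Cardinal.mk ↥(Set.Ici x) < Cardinal.mk Y :=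
  ⟨fun h => lt_of_le_of_ne (Cardinal.mk_set_le _) h, fun h => ne_of_lt h⟩

lemma lo_downclosed {x y : Y} (hy : y ∈ Lo Y) (hxy : x ≤ y) : x ∈ Lo Y := by
  rw [mem_lo_iff] at *
  exact lt_of_le_of_lt (Cardinal.mk_le_mk_of_subset (Set.Iic_subset_Iic.mpr hxy)) hy

lemma hi_upclosed {x y : Y} (hx : x ∈ Hi Y) (hxy : x ≤ y) : y ∈ Hi Y := by
  rw [mem_hi_iff] at *
  exact lt_of_le_of_lt (Cardinal.mk_le_mk_of_subset (Set.Ici_subset_Ici.mpr hxy)) hx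

lemma lo_lt_of_not_lo {x y : Y} (hx : x ∈ Lo Y) (hy : y ∉ Lo Y) : x < y := by
  by_contra h
  push_neg at h
  exact hy (lo_downclosed hx h)

lemma lt_hi_of_not_hi {x y : Y} (hy : y ∈ Hi Y) (hx : x ∉ Hi Y) : x < y := by
  by_contra h
  push_neg at h
  exact hx (hi_upclosed hy h)

lemma lo_hi_disjoint : ∀ x : Y, ¬ (x ∈ Lo Y ∧ x ∈ Hi Y) := by
  rintro x ⟨h1, h2⟩
  rw [mem_lo_iff] at h1
  rw [mem_hi_iff] at h2
  have huniv : (Set.Iic x ∪ Set.Ici x) = (Set.univ : Set Y) := by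
    ext z; simp [le_total z x]
  have h3 : Cardinal.mk Y ≤ Cardinal.mk ↥(Set.Iic x) + Cardinal.mk ↥(Set.Ici x) := by
    have := Cardinal.mk_union_le (Set.Iic x) (Set.Ici x)
    rw [huniv] at this
    simpa using this
  exact absurd (lt_of_le_of_lt h3 (Cardinal.add_lt_of_lt (Cardinal.aleph0_le_mk Y) h1 h2))
    (lt_irrefl _)

lemma not_lo_of_x0 {x : Y} (h : x ∉ Lo Y ∪ Hi Y) : ¬ x ∈ Lo Y := fun hx => h (Or.inl hx)
lemma not_hi_of_x0 {x : Y} (h : x ∉ Lo Y ∪ Hi Y) : ¬ x ∈ Hi Y := fun hx => h (Or.inr hx)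

include hfin in
lemma lo_pt_finite {x : Y} (hx : x ∈ Lo Y) : (Set.Iic x).Finite := by
  refine (lo_finite hfin).subset ?_
  intro y hy
  exact lo_downclosed hx hy

include hfin in
lemma hi_pt_finite {x : Y} (hx : x ∈ Hi Y) : (Set.Ici x).Finite := by
  refine (hi_finite hfin).subset ?_
  intro y hy
  exact hi_upclosed hx hy

lemma mk_Iio_of_not_lo {x : Y} (hx : x ∉ Lo Y) :
    Cardinal.mk ↥(Set.Iio x) = Cardinal.mk Y := by
  have h1 : Cardinal.mk ↥(Set.Iic x) = Cardinal.mk Y := not_not.mp hx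
  have h2 : Set.Iic x \ {x} = Set.Iio x := by
    ext z
    simp only [mem_diff, mem_Iic, mem_singleton_iff, mem_Iio]
    constructor
    · rintro ⟨h, hne⟩; exact lt_of_le_of_ne h hne
    · intro h; exact ⟨le_of_lt h, ne_of_lt h⟩
  rw [← h2]
  exact mk_diff_finite h1 (finite_singleton x)

lemma mk_Ioi_of_not_hi {x : Y} (hx : x ∉ Hi Y) :
    Cardinal.mk ↥(Set.Ioi x) = Cardinal.mk Y := by
  have h1 : Cardinal.mk ↥(Set.Ici x) = Cardinal.mk Y := not_not.mp hx
  have h2 : Set.Ici x \ {x} = Set.Ioi x := by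
    ext z
    simp only [mem_diff, mem_Ici, mem_singleton_iff, mem_Ioi]
    constructor
    · rintro ⟨h, hne⟩; exact lt_of_le_of_ne h (Ne.symm hne)
    · intro h; exact ⟨le_of_lt h, (ne_of_lt h).symm⟩
  rw [← h2]
  exact mk_diff_finite h1 (finite_singleton x)

lemma infinite_of_mk_eq {s : Set Y} (hs : Cardinal.mk ↥s = Cardinal.mk Y) : s.Infinite := by
  have h : Infinite ↥s := Cardinal.infinite_iff.mpr (by rw [hs]; exact Cardinal.aleph0_le_mk Y)
  exact Set.infinite_coe_iff.mp h

end Prelim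

end Stmt18
namespace Stmt18

variable {Y : Type*} [LinearOrder Y] [Infinite Y]

def IsJ (f : Y → Y) : Prop := Monotone f ∧ Cardinal.mk ↥(Set.range f) = Cardinal.mk Y

def Decomp (δ : Y → Y) : Prop :=
  ∃ l : List (Y → Y), l ≠ [] ∧ (∀ f ∈ l, IsJ f) ∧ δ = l.foldr (· ∘ ·) id

lemma decomp_of_two {β γ δ : Y → Y} (hβ : IsJ β) (hγ : IsJ γ) (h : δ = β ∘ γ) : Decomp δ := by
  refine ⟨[β, γ], by simp, ?_, ?_⟩
  · intro f hf
    simp only [List.mem_cons, List.not_mem_nil, or_false] at hf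
    rcases hf with rfl | rfl
    · exact hβ
    · exact hγ
  · simpa using h

lemma decomp_cons {h δ : Y → Y} (hh : IsJ h) (hd : Decomp δ) : Decomp (h ∘ δ) := by
  obtain ⟨l, hne, hJ, heq⟩ := hd
  refine ⟨h :: l, by simp, ?_, ?_⟩
  · intro f hf
    rcases List.mem_cons.mp hf with rfl | hf
    · exact hh
    · exact hJ f hf
  · simp only [List.foldr_cons]
    rw [← heq]

lemma range_mk_eq {f : Y → Y} {s : Set Y} (hsub : s ⊆ Set.range f)
    (hs : Cardinal.mk ↥s = Cardinal.mk Y) : Cardinal.mk ↥(Set.range f) = Cardinal.mk Y :=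
  mk_eq_of_superset hsub hs

/-- Case A1: two-factor decomposition when some two-sided point has a non-low value. -/
lemma caseA1 (hfin : {x : Y | ¬ (Cardinal.mk ↥(Set.Iic x) = Cardinal.mk Y ∧
      Cardinal.mk ↥(Set.Ici x) = Cardinal.mk Y)}.Finite)
    (δ : Y → Y) (hm : Monotone δ) (hle : ∀ x, δ x ≤ x)
    (b : Y) (hb : b ∉ Lo Y ∪ Hi Y) (hδb : δ b ∉ Lo Y) : Decomp δ := by
  classical
  set γ : Y → Y := fun x => if x < b then δ x else x with hγdef
  set β : Y → Y := fun z => if z < b then min z (δ b) else δ z with hβdef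
  have hγm : Monotone γ := by
    intro x x' hxx
    simp only [hγdef]
    by_cases h1 : x < b
    · by_cases h2 : x' < b
      · rw [if_pos h1, if_pos h2]; exact hm hxx
      · rw [if_pos h1, if_neg h2]; exact le_trans (hle x) hxx
    · have h2 : ¬ x' < b := fun hc => h1 (lt_of_le_of_lt hxx hc)
      rw [if_neg h1, if_neg h2]; exact hxx
  have hβm : Monotone β := by
    intro z z' hzz
    simp only [hβdef]
    by_cases h1 : z < b
    · by_cases h2 : z' < b
      · rw [if_pos h1, if_pos h2]; exact min_le_min hzz le_rfl
      · rw [if_pos h1, if_neg h2]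
        exact le_trans (min_le_right _ _) (hm (le_of_not_gt h2))
    · have h2 : ¬ z' < b := fun hc => h1 (lt_of_le_of_lt hzz hc)
      rw [if_neg h1, if_neg h2]; exact hm hzz
  have hγJ : IsJ γ := by
    refine ⟨hγm, range_mk_eq (s := Set.Ici b) ?_ (not_not.mp (not_hi_of_x0 hb))⟩
    intro z hz
    refine ⟨z, ?_⟩
    simp only [hγdef]
    rw [if_neg (not_lt.mpr hz)]
  have hβJ : IsJ β := by
    refine ⟨hβm, range_mk_eq (s := Set.Iio (δ b)) ?_ (mk_Iio_of_not_lo hδb)⟩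
    intro z hz
    have hzb : z < b := lt_of_lt_of_le hz (hle b)
    refine ⟨z, ?_⟩
    simp only [hβdef]
    rw [if_pos hzb, min_eq_left (le_of_lt hz)]
  refine decomp_of_two hβJ hγJ ?_
  funext x
  simp only [Function.comp_apply, hγdef, hβdef]
  by_cases h1 : x < b
  · rw [if_pos h1]
    have h2 : δ x < b := lt_of_le_of_lt (hle x) h1
    rw [if_pos h2, min_eq_left (hm (le_of_lt h1))]
  · rw [if_neg h1, if_neg h1]

end Stmt18
namespace Stmt18

set_option linter.unusedSectionVars false
set_option linter.unusedVariables false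

variable {Y : Type*} [LinearOrder Y] [Infinite Y]

lemma D_subset_hi {D : Set Y} (hDfin : D.Finite)
    (hDup : ∀ ⦃a b : Y⦄, a ∈ D → a ≤ b → b ∈ D) : D ⊆ Hi Y := by
  intro d hd
  rw [mem_hi_iff]
  have hsub : Set.Ici d ⊆ D := fun y hy => hDup hd hy
  have hfinI : (Set.Ici d).Finite := hDfin.subset hsub
  exact lt_of_lt_of_le hfinI.lt_aleph0 (Cardinal.aleph0_le_mk Y)

/-- Core case (1a): the top fiber contains a two-sided point. -/
lemma core1a (hfin : {x : Y | ¬ (Cardinal.mk ↥(Set.Iic x) = Cardinal.mk Y ∧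
      Cardinal.mk ↥(Set.Ici x) = Cardinal.mk Y)}.Finite)
    (D : Set Y) (ψ : Y → Y) (hDfin : D.Finite)
    (hDup : ∀ ⦃a b : Y⦄, a ∈ D → a ≤ b → b ∈ D)
    (hDid : ∀ x ∈ D, ψ x = x)
    (hm : Monotone ψ) (hle : ∀ x, ψ x ≤ x)
    (Q : Y) (hQD : Q ∉ D) (hQ0 : Q ∉ Lo Y ∪ Hi Y)
    (hQmax : ∀ x, x ∉ D → ψ x ≤ ψ Q) : Decomp ψ := by
  classical
  have hDHi : D ⊆ Hi Y := D_subset_hi hDfin hDup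
  have hQLo : Q ∉ Lo Y := not_lo_of_x0 hQ0
  have hQHi : Q ∉ Hi Y := not_hi_of_x0 hQ0
  -- pick w₀ ∈ X⁰ with w₀ < Q
  obtain ⟨w₀, hw₀⟩ : ((Set.Iio Q) \ (Lo Y ∪ Hi Y)).Nonempty := by
    have h1 : (Set.Iio Q).Infinite := infinite_of_mk_eq (mk_Iio_of_not_lo hQLo)
    exact (h1.diff (lohi_finite hfin)).nonempty
  have hw₀Q : w₀ < Q := hw₀.1
  have hw₀Lo : w₀ ∉ Lo Y := not_lo_of_x0 hw₀.2
  have hw₀Hi : w₀ ∉ Hi Y := not_hi_of_x0 hw₀.2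
  have hw₀D : w₀ ∉ D := fun hc => hw₀Hi (hDHi hc)
  -- the caps
  set cap : Y → Y := fun ℓ =>
    if ℓ = ψ Q then Q
    else if h : ({x | x ∉ D ∧ ψ x = ℓ ∧ w₀ < x}).Nonempty then h.some else Q with hcapdef
  have hcap : ∀ x, x ∉ D → w₀ < x →
      (cap (ψ x) ∉ D ∧ ψ (cap (ψ x)) = ψ x ∧ w₀ < cap (ψ x)) := by
    intro x hxD hwx
    by_cases hx : ψ x = ψ Q
    · simp only [hcapdef, if_pos hx]
      exact ⟨hQD, hx.symm, hw₀Q⟩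
    · have hne : ({z | z ∉ D ∧ ψ z = ψ x ∧ w₀ < z}).Nonempty := ⟨x, hxD, rfl, hwx⟩
      simp only [hcapdef, if_neg hx, dif_pos hne]
      exact hne.some_mem
  have hcapQ : ∀ x, x ∉ D → w₀ < x → cap (ψ x) ≤ Q := by
    intro x hxD hwx
    by_contra hc
    push_neg at hc
    obtain ⟨hc1, hc2, _⟩ := hcap x hxD hwx
    have h1 : ψ Q ≤ ψ (cap (ψ x)) := hm (le_of_lt hc)
    rw [hc2] at h1
    have h2 : ψ x = ψ Q := le_antisymm (hQmax x hxD) h1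
    have : cap (ψ x) = Q := by simp only [hcapdef, if_pos h2]
    rw [this] at hc
    exact lt_irrefl _ hc
  have hcaporder : ∀ x x', x ∉ D → w₀ < x → x' ∉ D → w₀ < x' → ψ x < ψ x' →
      cap (ψ x) < cap (ψ x') := by
    intro x x' hxD hwx hxD' hwx' hψ
    by_contra hc
    push_neg at hc
    have h1 : ψ (cap (ψ x')) ≤ ψ (cap (ψ x)) := hm hc
    rw [(hcap x hxD hwx).2.1, (hcap x' hxD' hwx').2.1] at h1
    exact absurd (lt_of_lt_of_le hψ h1) (lt_irrefl _)
  -- the two factors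
  set γ : Y → Y := fun x => if x ∈ D then x else if x ≤ w₀ then x else cap (ψ x) with hγdef
  set β : Y → Y := fun z => if z ∈ D then z else if z ≤ Q then ψ z else z with hβdef
  have hCltD : ∀ {c d : Y}, c ∉ D → d ∈ D → c < d := by
    intro c d hc hd
    by_contra h
    push_neg at h
    exact hc (hDup hd h)
  have hγm : Monotone γ := by
    intro x x' hxx
    simp only [hγdef]
    by_cases h1 : x ∈ D
    · have h2 : x' ∈ D := hDup h1 hxx
      rw [if_pos h1, if_pos h2]; exact hxx
    · by_cases h2 : x' ∈ D
      · rw [if_pos h2, if_neg h1]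
        by_cases h3 : x ≤ w₀
        · rw [if_pos h3]; exact hxx
        · rw [if_neg h3]
          exact le_of_lt (hCltD (hcap x h1 (lt_of_not_ge h3)).1 h2)
      · rw [if_neg h1, if_neg h2]
        by_cases h3 : x ≤ w₀
        · by_cases h4 : x' ≤ w₀
          · rw [if_pos h3, if_pos h4]; exact hxx
          · rw [if_pos h3, if_neg h4]
            exact le_trans h3 (le_of_lt (hcap x' h2 (lt_of_not_ge h4)).2.2)
        · have h4 : ¬ x' ≤ w₀ := fun hc => h3 (le_trans hxx hc)
          rw [if_neg h3, if_neg h4]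
          rcases eq_or_lt_of_le (hm hxx) with he | hlt
          · rw [he]
          · exact le_of_lt (hcaporder x x' h1 (lt_of_not_ge h3) h2 (lt_of_not_ge h4) hlt)
  have hβm : Monotone β := by
    intro z z' hzz
    simp only [hβdef]
    by_cases h1 : z ∈ D
    · have h2 : z' ∈ D := hDup h1 hzz
      rw [if_pos h1, if_pos h2]; exact hzz
    · by_cases h2 : z' ∈ D
      · rw [if_neg h1, if_pos h2]
        by_cases h3 : z ≤ Q
        · rw [if_pos h3]; exact le_trans (hle z) hzz
        · rw [if_neg h3]; exact hzz
      · rw [if_neg h1, if_neg h2]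
        by_cases h3 : z ≤ Q
        · by_cases h4 : z' ≤ Q
          · rw [if_pos h3, if_pos h4]; exact hm hzz
          · rw [if_pos h3, if_neg h4]
            exact le_trans (hQmax z h1) (le_trans (hle Q) (le_of_not_ge h4))
        · have h4 : ¬ z' ≤ Q := fun hc => h3 (le_trans hzz hc)
          rw [if_neg h3, if_neg h4]; exact hzz
  have hγJ : IsJ γ := by
    refine ⟨hγm, range_mk_eq (s := Set.Iic w₀) ?_ (not_not.mp hw₀Lo)⟩
    intro z hz
    have hzD : z ∉ D := by
      intro hc
      exact hw₀D (hDup hc hz)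
    exact ⟨z, by simp only [hγdef]; rw [if_neg hzD, if_pos (show z ≤ w₀ from hz)]⟩
  have hβJ : IsJ β := by
    have hmkIci : Cardinal.mk ↥(Set.Ici Q) = Cardinal.mk Y := not_not.mp hQHi
    have hmk : Cardinal.mk ↥(Set.Ici Q \ ({Q} ∪ D)) = Cardinal.mk Y :=
      mk_diff_finite hmkIci ((Set.finite_singleton Q).union hDfin)
    refine ⟨hβm, range_mk_eq (s := Set.Ici Q \ ({Q} ∪ D)) ?_ hmk⟩
    rintro z ⟨hz1, hz2⟩
    have hzQ : Q < z := lt_of_le_of_ne hz1 (fun hc => hz2 (Or.inl hc.symm))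
    have hzD : z ∉ D := fun hc => hz2 (Or.inr hc)
    exact ⟨z, by simp only [hβdef]; rw [if_neg hzD, if_neg (not_le.mpr hzQ)]⟩
  refine decomp_of_two hβJ hγJ ?_
  funext x
  simp only [Function.comp_apply, hγdef, hβdef]
  by_cases h1 : x ∈ D
  · rw [if_pos h1, if_pos h1, hDid x h1]
  · rw [if_neg h1]
    by_cases h2 : x ≤ w₀
    · rw [if_pos h2, if_neg h1, if_pos (le_trans h2 (le_of_lt hw₀Q))]
    · rw [if_neg h2]
      have hwx : w₀ < x := lt_of_not_ge h2
      obtain ⟨hc1, hc2, _⟩ := hcap x h1 hwx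
      rw [if_neg hc1, if_pos (hcapQ x h1 hwx), hc2]

end Stmt18
namespace Stmt18

set_option linter.unusedSectionVars false
set_option linter.unusedVariables false
set_option maxHeartbeats 1000000

variable {Y : Type*} [LinearOrder Y] [Infinite Y]

/-- The core recursion: ψ is the identity on a finite final set D and takes Lo values off D. -/
lemma core (hfin : {x : Y | ¬ (Cardinal.mk ↥(Set.Iic x) = Cardinal.mk Y ∧
      Cardinal.mk ↥(Set.Ici x) = Cardinal.mk Y)}.Finite) :
    ∀ (n : ℕ) (D : Set Y) (ψ : Y → Y), D.Finite →
    (∀ ⦃a b : Y⦄, a ∈ D → a ≤ b → b ∈ D) →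
    (∀ x ∈ D, ψ x = x) →
    (∀ x, x ∉ D → ψ x ∈ Lo Y) →
    Monotone ψ → (∀ x, ψ x ≤ x) →
    (Hi Y \ D).ncard = n →
    Decomp ψ := by
  classical
  intro n
  induction n using Nat.strong_induction_on with
  | _ n IH =>
  intro D ψ hDfin hDup hDid hLoval hm hle hcard
  have hDHi : D ⊆ Hi Y := D_subset_hi hDfin hDup
  -- the set of values off D
  have hCne : ({x : Y | x ∉ D} : Set Y).Nonempty := by
    have : ({x : Y | x ∉ D} : Set Y).Infinite := by
      have := hDfin.infinite_compl
      simpa [Set.compl_def] using this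
    exact this.nonempty
  have hVfin : (ψ '' {x | x ∉ D}).Finite := by
    refine (lo_finite hfin).subset ?_
    rintro y ⟨x, hx, rfl⟩
    exact hLoval x hx
  have hVne : (ψ '' {x | x ∉ D}).Nonempty := hCne.image ψ
  obtain ⟨ℓmax, hℓmem, hℓmax⟩ : ∃ a ∈ ψ '' {x | x ∉ D}, ∀ a' ∈ ψ '' {x | x ∉ D},
      id a ≤ id a' → id a = id a' := by
    obtain ⟨a, ha, hmx⟩ := hVfin.exists_maximalFor id _ hVne
    exact ⟨a, ha, fun b hb hab => le_antisymm hab (hmx hb hab)⟩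
  simp only [id] at hℓmax
  obtain ⟨g, hgD, hgψ⟩ := hℓmem
  have hmax : ∀ x, x ∉ D → ψ x ≤ ℓmax := by
    intro x hx
    by_contra h
    push_neg at h
    have h2 := hℓmax (ψ x) ⟨x, hx, rfl⟩ (le_of_lt h)
    rw [h2] at h
    exact lt_irrefl _ h
  have hℓLo : ℓmax ∈ Lo Y := by
    rw [← hgψ]; exact hLoval g hgD
  by_cases h1a : ∃ Q, Q ∉ D ∧ Q ∉ Lo Y ∪ Hi Y ∧ ψ Q = ℓmax
  · obtain ⟨Q, hQD, hQ0, hQψ⟩ := h1a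
    refine core1a hfin D ψ hDfin hDup hDid hm hle Q hQD hQ0 ?_
    intro x hx
    rw [hQψ]
    exact hmax x hx
  · -- case (1b)
    push_neg at h1a
    -- the part of the top fiber inside Hi is nonempty
    have hGkHi : ∃ t, t ∉ D ∧ ψ t = ℓmax ∧ t ∈ Hi Y := by
      by_contra hc
      push_neg at hc
      -- then the top fiber is contained in Lo, and the whole of Y is finite
      have hfib : ∀ x, x ∉ D → ψ x = ℓmax → x ∈ Lo Y := by
        intro x hxD hxψ
        by_cases hLo : x ∈ Lo Y
        · exact hLo
        · by_cases hHi : x ∈ Hi Y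
          · exact absurd hHi (hc x hxD hxψ)
          · exact absurd hxψ (h1a x hxD (by simp [hLo, hHi]))
      have hgLo : g ∈ Lo Y := hfib g hgD hgψ
      have huniv : (Set.univ : Set Y) ⊆ Set.Iic g ∪ Lo Y ∪ D := by
        intro x _
        by_cases hxD : x ∈ D
        · exact Or.inr hxD
        · rcases le_or_gt x g with h | h
          · exact Or.inl (Or.inl h)
          · have h2 : ℓmax ≤ ψ x := by rw [← hgψ]; exact hm (le_of_lt h)
            have h3 : ψ x = ℓmax := le_antisymm (hmax x hxD) h2
            exact Or.inl (Or.inr (hfib x hxD h3))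
      have : (Set.univ : Set Y).Finite :=
        Set.Finite.subset (((lo_pt_finite hfin hgLo).union (lo_finite hfin)).union hDfin) huniv
      exact Set.infinite_univ this
    obtain ⟨t, htD, htψ, htHi⟩ := hGkHi
    -- pick a two-sided point u
    obtain ⟨u, hu⟩ := (X0_infinite hfin).nonempty
    have huLo : u ∉ Lo Y := not_lo_of_x0 hu
    have huHi : u ∉ Hi Y := not_hi_of_x0 hu
    have hudlt : ∀ d ∈ D, u < d := fun d hd => lt_hi_of_not_hi (hDHi hd) huHi
    have hvu : ∀ x, x ∉ D → ψ x < u := fun x hx => lo_lt_of_not_lo (hLoval x hx) huLo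
    have hℓu : ℓmax < u := lo_lt_of_not_lo hℓLo huLo
    have hℓg : ∀ x, x ∉ D → ψ x = ℓmax → ℓmax ≤ x := fun x hx hxe => hxe ▸ hle x
    -- the maps
    set ψ₂ : Y → Y := fun x => if x ∈ D then x else if ψ x = ℓmax then min x u else ψ x
      with hψ₂def
    set hmap : Y → Y := fun z => if u < z then z else min z ℓmax with hhdef
    set T₂ : Set Y := D ∪ {x | x ∉ D ∧ ψ x = ℓmax ∧ x ∈ Hi Y} with hT₂def
    set ψtop : Y → Y := fun z => if z ∈ T₂ then ψ₂ z else min z u with htopdef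
    set ψC : Y → Y := fun x => if x ∈ T₂ then x else ψ₂ x with hCdef
    have hψ₂le : ∀ x, ψ₂ x ≤ x := by
      intro x
      simp only [hψ₂def]
      by_cases h1 : x ∈ D
      · rw [if_pos h1]
      · rw [if_neg h1]
        by_cases h2 : ψ x = ℓmax
        · rw [if_pos h2]; exact min_le_left _ _
        · rw [if_neg h2]; exact hle x
    have hψ₂m : Monotone ψ₂ := by
      intro x x' hxx
      simp only [hψ₂def]
      by_cases h1 : x ∈ D
      · rw [if_pos h1, if_pos (hDup h1 hxx)]; exact hxx
      · by_cases h2 : x' ∈ D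
        · rw [if_neg h1, if_pos h2]
          by_cases h3 : ψ x = ℓmax
          · rw [if_pos h3]
            exact le_trans (min_le_right _ _) (le_of_lt (hudlt x' h2))
          · rw [if_neg h3]
            exact le_trans (le_of_lt (hvu x h1)) (le_of_lt (hudlt x' h2))
        · rw [if_neg h1, if_neg h2]
          by_cases h3 : ψ x = ℓmax
          · have h4 : ψ x' = ℓmax := le_antisymm (hmax x' h2) (h3 ▸ hm hxx)
            rw [if_pos h3, if_pos h4]
            exact min_le_min hxx le_rfl
          · by_cases h4 : ψ x' = ℓmax
            · rw [if_neg h3, if_pos h4]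
              refine le_min ?_ (le_of_lt (hvu x h1))
              exact le_trans (hm hxx) (h4 ▸ hℓg x' h2 h4)
            · rw [if_neg h3, if_neg h4]; exact hm hxx
    -- h ∘ ψ₂ = ψ
    have hcomp1 : hmap ∘ ψ₂ = ψ := by
      funext x
      simp only [Function.comp_apply, hψ₂def, hhdef]
      by_cases h1 : x ∈ D
      · rw [if_pos h1, if_pos (hudlt x h1), hDid x h1]
      · rw [if_neg h1]
        by_cases h2 : ψ x = ℓmax
        · rw [if_pos h2, if_neg (not_lt.mpr (min_le_right x u))]
          rw [h2]
          refine min_eq_right (le_min (hℓg x h1 h2) (le_of_lt hℓu))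
        · rw [if_neg h2, if_neg (not_lt.mpr (le_of_lt (hvu x h1)))]
          exact min_eq_left (hmax x h1)
    have hhm : Monotone hmap := by
      intro z z' hzz
      simp only [hhdef]
      by_cases h1 : u < z
      · rw [if_pos h1, if_pos (lt_of_lt_of_le h1 hzz)]; exact hzz
      · by_cases h2 : u < z'
        · rw [if_neg h1, if_pos h2]
          exact le_trans (min_le_right _ _) (le_trans (le_of_lt hℓu) (le_of_lt h2))
        · rw [if_neg h1, if_neg h2]; exact min_le_min hzz le_rfl
    have hhJ : IsJ hmap := by
      refine ⟨hhm, range_mk_eq (s := Set.Ioi u) ?_ (mk_Ioi_of_not_hi huHi)⟩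
      intro z hz
      exact ⟨z, by simp only [hhdef]; rw [if_pos (show u < z from hz)]⟩
    -- T₂ facts
    have hT₂fin : T₂.Finite := by
      refine hDfin.union ((hi_finite hfin).subset ?_)
      rintro x ⟨_, _, hx⟩
      exact hx
    have hT₂up : ∀ ⦃a b : Y⦄, a ∈ T₂ → a ≤ b → b ∈ T₂ := by
      rintro a b (ha | ⟨haD, haψ, haHi⟩) hab
      · exact Or.inl (hDup ha hab)
      · by_cases hbD : b ∈ D
        · exact Or.inl hbD
        · refine Or.inr ⟨hbD, le_antisymm (hmax b hbD) (haψ ▸ hm hab), hi_upclosed haHi hab⟩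
    have hT₂Hi : T₂ ⊆ Hi Y := by
      rintro x (hx | ⟨_, _, hx⟩)
      · exact hDHi hx
      · exact hx
    have huT₂ : ∀ z ∈ T₂, u < z := fun z hz => lt_hi_of_not_hi (hT₂Hi hz) huHi
    have hψ₂T₂ge : ∀ z ∈ T₂, u ≤ ψ₂ z := by
      rintro z (hz | ⟨hzD, hzψ, hzHi⟩)
      · simp only [hψ₂def]; rw [if_pos hz]; exact le_of_lt (hudlt z hz)
      · simp only [hψ₂def]; rw [if_neg hzD, if_pos hzψ]
        exact le_min (le_of_lt (huT₂ z (Or.inr ⟨hzD, hzψ, hzHi⟩))) le_rfl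
    -- ψC values are in Lo
    have hCLo : ∀ x, x ∉ T₂ → ψC x ∈ Lo Y := by
      intro x hx
      have hxD : x ∉ D := fun hc => hx (Or.inl hc)
      simp only [hCdef]
      rw [if_neg hx]
      simp only [hψ₂def]
      rw [if_neg hxD]
      by_cases h2 : ψ x = ℓmax
      · rw [if_pos h2]
        have hxHi : x ∉ Hi Y := fun hc => hx (Or.inr ⟨hxD, h2, hc⟩)
        have hxLo : x ∈ Lo Y := by
          by_contra hc
          exact h1a x hxD (by simp [hc, hxHi]) h2
        rw [min_eq_left (le_of_lt (lo_lt_of_not_lo hxLo huLo))]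
        exact hxLo
      · rw [if_neg h2]
        exact hLoval x hxD
    -- ψtop ∘ ψC = ψ₂
    have hcomp2 : ψtop ∘ ψC = ψ₂ := by
      funext x
      simp only [Function.comp_apply, hCdef, htopdef]
      by_cases h1 : x ∈ T₂
      · rw [if_pos h1, if_pos h1]
      · rw [if_neg h1]
        have h2 : ψ₂ x ∈ Lo Y := by
          have := hCLo x h1
          simp only [hCdef] at this
          rwa [if_neg h1] at this
        have h3 : ψ₂ x ∉ T₂ := by
          intro hc
          exact lo_hi_disjoint (ψ₂ x) ⟨h2, hT₂Hi hc⟩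
        rw [if_neg h3]
        exact min_eq_left (le_of_lt (lo_lt_of_not_lo h2 huLo))
    have htopm : Monotone ψtop := by
      intro z z' hzz
      simp only [htopdef]
      by_cases h1 : z ∈ T₂
      · rw [if_pos h1, if_pos (hT₂up h1 hzz)]
        exact hψ₂m hzz
      · by_cases h2 : z' ∈ T₂
        · rw [if_neg h1, if_pos h2]
          exact le_trans (min_le_right _ _) (hψ₂T₂ge z' h2)
        · rw [if_neg h1, if_neg h2]; exact min_le_min hzz le_rfl
    have htopJ : IsJ ψtop := by
      refine ⟨htopm, range_mk_eq (s := Set.Iic u) ?_ (not_not.mp huLo)⟩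
      intro z hz
      have hzT : z ∉ T₂ := fun hc => absurd (huT₂ z hc) (not_lt.mpr hz)
      exact ⟨z, by simp only [htopdef]; rw [if_neg hzT, min_eq_left hz]⟩
    -- ψC hypotheses, recursion
    have hCm : Monotone ψC := by
      intro x x' hxx
      simp only [hCdef]
      by_cases h1 : x ∈ T₂
      · rw [if_pos h1, if_pos (hT₂up h1 hxx)]; exact hxx
      · by_cases h2 : x' ∈ T₂
        · rw [if_neg h1, if_pos h2]
          exact le_trans (hψ₂le x) hxx
        · rw [if_neg h1, if_neg h2]; exact hψ₂m hxx
    have hCle : ∀ x, ψC x ≤ x := by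
      intro x
      simp only [hCdef]
      by_cases h1 : x ∈ T₂
      · rw [if_pos h1]
      · rw [if_neg h1]; exact hψ₂le x
    have hCid : ∀ x ∈ T₂, ψC x = x := by
      intro x hx
      simp only [hCdef]; rw [if_pos hx]
    have hlt : (Hi Y \ T₂).ncard < n := by
      rw [← hcard]
      refine Set.ncard_lt_ncard ?_ ((hi_finite hfin).diff (t := D))
      constructor
      · intro z hz
        exact ⟨hz.1, fun hc => hz.2 (Or.inl hc)⟩
      · intro hsub
        have h1 : t ∈ Hi Y \ D := ⟨htHi, htD⟩
        have h2 := hsub h1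
        exact h2.2 (Or.inr ⟨htD, htψ, htHi⟩)
    have hrec : Decomp ψC :=
      IH _ hlt T₂ ψC hT₂fin hT₂up hCid hCLo hCm hCle rfl
    have hd2 : Decomp ψ₂ := by
      rw [← hcomp2]
      exact decomp_cons htopJ hrec
    rw [← hcomp1]
    exact decomp_cons hhJ hd2

end Stmt18
namespace Stmt18

set_option linter.unusedSectionVars false
set_option linter.unusedVariables false
set_option maxHeartbeats 1000000

variable {Y : Type*} [LinearOrder Y] [Infinite Y]

/-- Every monotone map below the identity decomposes into J-factors. -/
lemma lemA (hfin : {x : Y | ¬ (Cardinal.mk ↥(Set.Iic x) = Cardinal.mk Y ∧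
      Cardinal.mk ↥(Set.Ici x) = Cardinal.mk Y)}.Finite)
    (δ : Y → Y) (hm : Monotone δ) (hle : ∀ x, δ x ≤ x) : Decomp δ := by
  classical
  by_cases h1 : ∃ b, b ∉ Lo Y ∪ Hi Y ∧ δ b ∉ Lo Y
  · obtain ⟨b, hb0, hbv⟩ := h1
    exact caseA1 hfin δ hm hle b hb0 hbv
  · simp only [not_exists, not_and, not_not] at h1
    set T : Set Y := {x | δ x ∉ Lo Y} with hTdef
    have hTHi : T ⊆ Hi Y := by
      intro x hx
      by_cases hLo : x ∈ Lo Y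
      · exact absurd (lo_downclosed hLo (hle x)) hx
      · by_cases hHi : x ∈ Hi Y
        · exact hHi
        · exact absurd (h1 x (by simp [hLo, hHi])) hx
    have hTfin : T.Finite := (hi_finite hfin).subset hTHi
    have hTup : ∀ ⦃a b : Y⦄, a ∈ T → a ≤ b → b ∈ T := by
      intro a b ha hab hc
      exact ha (lo_downclosed hc (hm hab))
    have hTval : ∀ x, x ∉ T → δ x ∈ Lo Y := fun x hx => not_not.mp hx
    by_cases hTe : T.Nonempty
    · -- strip the top part
      obtain ⟨d₁, hd₁T, hd₁min⟩ : ∃ d₁ ∈ T, ∀ z ∈ T, d₁ ≤ z := by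
        obtain ⟨d₁, hmem, hmin⟩ : ∃ a ∈ T, ∀ a' ∈ T, id a' ≤ id a → id a = id a' := by
          obtain ⟨a, ha, hmn⟩ := hTfin.exists_minimalFor id _ hTe
          exact ⟨a, ha, fun b hb hab => le_antisymm (hmn hb hab) hab⟩
        refine ⟨d₁, hmem, fun z hz => ?_⟩
        by_contra hc
        push_neg at hc
        exact absurd (hmin z hz (le_of_lt hc)).symm (ne_of_lt hc)
      set v₁ : Y := δ d₁ with hv₁def
      have hv₁Lo : v₁ ∉ Lo Y := hd₁T
      set δC : Y → Y := fun x => if x ∈ T then x else δ x with hCdef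
      set δtop : Y → Y := fun z => if z ∈ T then δ z else min z v₁ with htopdef
      have hcompT : δtop ∘ δC = δ := by
        funext x
        simp only [Function.comp_apply, hCdef, htopdef]
        by_cases hx : x ∈ T
        · rw [if_pos hx, if_pos hx]
        · rw [if_neg hx]
          have h2 : δ x ∈ Lo Y := hTval x hx
          have h3 : δ x ∉ T := fun hc => hc (lo_downclosed h2 (hle (δ x)))
          rw [if_neg h3]
          exact min_eq_left (le_of_lt (lo_lt_of_not_lo h2 hv₁Lo))
      have htopm : Monotone δtop := by
        intro z z' hzz
        simp only [htopdef]
        by_cases hz : z ∈ T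
        · rw [if_pos hz, if_pos (hTup hz hzz)]; exact hm hzz
        · by_cases hz' : z' ∈ T
          · rw [if_neg hz, if_pos hz']
            exact le_trans (min_le_right _ _) (hm (hd₁min z' hz'))
          · rw [if_neg hz, if_neg hz']; exact min_le_min hzz le_rfl
      have htopJ : IsJ δtop := by
        refine ⟨htopm, range_mk_eq (s := Set.Iio v₁) ?_ (mk_Iio_of_not_lo hv₁Lo)⟩
        intro z hz
        have hzT : z ∉ T := by
          intro hc
          have : v₁ ≤ z := le_trans (hle d₁) (hd₁min z hc)
          exact absurd hz (not_lt.mpr this)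
        exact ⟨z, by simp only [htopdef]; rw [if_neg hzT, min_eq_left (le_of_lt hz)]⟩
      have hCm : Monotone δC := by
        intro x x' hxx
        simp only [hCdef]
        by_cases hx : x ∈ T
        · rw [if_pos hx, if_pos (hTup hx hxx)]; exact hxx
        · by_cases hx' : x' ∈ T
          · rw [if_neg hx, if_pos hx']; exact le_trans (hle x) hxx
          · rw [if_neg hx, if_neg hx']; exact hm hxx
      have hCle : ∀ x, δC x ≤ x := by
        intro x
        simp only [hCdef]
        by_cases hx : x ∈ T
        · rw [if_pos hx]
        · rw [if_neg hx]; exact hle x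
      have hCval : ∀ x, x ∉ T → δC x ∈ Lo Y := by
        intro x hx
        simp only [hCdef]; rw [if_neg hx]; exact hTval x hx
      have hCid : ∀ x ∈ T, δC x = x := by
        intro x hx; simp only [hCdef]; rw [if_pos hx]
      have hrec : Decomp δC :=
        core hfin _ T δC hTfin hTup hCid hCval hCm hCle rfl
      rw [← hcompT]
      exact decomp_cons htopJ hrec
    · -- T empty: core applies directly with D = ∅
      have hTe' : ∀ x : Y, x ∉ T := by
        intro x hx
        exact hTe ⟨x, hx⟩
      refine core hfin _ (∅ : Set Y) δ Set.finite_empty ?_ ?_ ?_ hm hle rfl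
      · intro a b ha
        exact absurd ha (Set.notMem_empty a)
      · intro x hx
        exact absurd hx (Set.notMem_empty x)
      · intro x _
        exact hTval x (hTe' x)

end Stmt18
section Final

set_option maxHeartbeats 1000000

theorem stmt_18 {X : Type*} [LinearOrder X] [Infinite X]
    (hfin : {x : X | ¬ (Cardinal.mk ↥(Set.Iic x) = Cardinal.mk X ∧
      Cardinal.mk ↥(Set.Ici x) = Cardinal.mk X)}.Finite)
    (α : X → X) (hα : Monotone α) :
    ∃ l : List (X → X), l ≠ [] ∧
      (∀ f ∈ l, Monotone f ∧ Cardinal.mk ↥(Set.range f) = Cardinal.mk X) ∧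
      α = l.foldr (· ∘ ·) id := by
  classical
  set δ : X → X := fun x => min (α x) x with hδdef
  set ε : X → X := fun x => max (α x) x with hεdef
  have hδm : Monotone δ := hα.min monotone_id
  have hεm : Monotone ε := hα.max monotone_id
  have hδle : ∀ x, δ x ≤ x := fun x => min_le_right _ _
  have hεge : ∀ x, x ≤ ε x := fun x => le_max_right _ _
  have hcomp : ε ∘ δ = α := by
    funext x
    simp only [Function.comp_apply, hδdef, hεdef]
    rcases le_total (α x) x with h | h
    · rw [min_eq_left h]
      exact max_eq_right (hα h)
    · rw [min_eq_right h]
      exact max_eq_left h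
  -- decompose δ
  obtain ⟨l₁, hne₁, hJ₁, heq₁⟩ := Stmt18.lemA hfin δ hδm hδle
  -- decompose ε via the dual order
  have hfin' : {x : Xᵒᵈ | ¬ (Cardinal.mk ↥(Set.Iic x) = Cardinal.mk Xᵒᵈ ∧
      Cardinal.mk ↥(Set.Ici x) = Cardinal.mk Xᵒᵈ)}.Finite := by
    refine Set.Finite.subset hfin ?_
    intro x hx hc
    exact hx ⟨hc.2, hc.1⟩
  haveI : Infinite Xᵒᵈ := (inferInstance : Infinite X)
  set ε' : Xᵒᵈ → Xᵒᵈ := fun x => OrderDual.toDual (ε (OrderDual.ofDual x)) with hε'def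
  have hεm' : Monotone ε' := fun a b hab => hεm hab
  have hεle' : ∀ x : Xᵒᵈ, ε' x ≤ x := fun x => hεge (OrderDual.ofDual x)
  obtain ⟨l₂, hne₂, hJ₂, heq₂⟩ := Stmt18.lemA (Y := Xᵒᵈ) hfin' ε' hεm' hεle'
  -- reinterpret l₂ over X
  have hJ₂' : ∀ f ∈ l₂, (@Monotone X X _ _ f) ∧
      Cardinal.mk ↥(Set.range (f : X → X)) = Cardinal.mk X := by
    intro f hf
    obtain ⟨hmono, hcard⟩ := hJ₂ f hf
    refine ⟨?_, hcard⟩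
    intro a b hab
    have h2 : (OrderDual.toDual b : Xᵒᵈ) ≤ OrderDual.toDual a := hab
    exact hmono h2
  -- assemble
  refine ⟨(show List (X → X) from l₂) ++ l₁, ?_, ?_, ?_⟩
  · intro hc
    exact hne₁ (List.append_eq_nil_iff.mp hc).2
  · intro f hf
    rcases List.mem_append.mp hf with hf | hf
    · exact ⟨(hJ₂' f hf).1, (hJ₂' f hf).2⟩
    · exact ⟨(hJ₁ f hf).1, (hJ₁ f hf).2⟩
  · have hfold : ((show List (X → X) from l₂) ++ l₁).foldr (· ∘ ·) id =
        ((show List (X → X) from l₂).foldr (· ∘ ·) id) ∘ (l₁.foldr (· ∘ ·) id) := by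
      rw [List.foldr_append]
      generalize l₁.foldr (· ∘ ·) id = g
      induction (show List (X → X) from l₂) with
      | nil => simp
      | cons a l ih => simp only [List.foldr_cons, ih, Function.comp_assoc]
    rw [hfold, ← heq₁]
    have heq₂' : ε = (show List (X → X) from l₂).foldr (· ∘ ·) id := heq₂
    rw [← heq₂', hcomp]

end Final
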